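/- Let Ξ ⊆ A^{ℤ²} be a subshift whose shift action is minimal and uniquely ergodic, and suppose Ξ admits a horizontal shear. If λ = (λ₁, λ₂) ∈ ℝ² is a topological eigenvalue of the shift action on Ξ, then λ₁ ∈ ℤ. -/

import Mathlib

open MeasureTheory

/-- The shift `ℤ²`-action on the full shift `A^{ℤ²}`: `(φⁿ u)(m) = u(m+n)`. -/
def shift2 {A : Type*} (n : ℤ × ℤ) (u : ℤ × ℤ → A) : ℤ × ℤ → A := fun m => u (m + n)

section Defs

variable {A : Type*} [TopologicalSpace A]

/-- A subshift: a nonempty, closed, shift-invariant subset of the full shift. -/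
def IsSubshift (Ξ : Set (ℤ × ℤ → A)) : Prop :=
  Ξ.Nonempty ∧ IsClosed Ξ ∧ ∀ (n : ℤ × ℤ), ∀ u ∈ Ξ, shift2 n u ∈ Ξ

/-- Minimality: every orbit is dense in the subshift. -/
def IsMinimalSubshift (Ξ : Set (ℤ × ℤ → A)) : Prop :=
  ∀ u ∈ Ξ, Ξ ⊆ closure {v | ∃ n : ℤ × ℤ, v = shift2 n u}

/-- Freeness: the shift action is free on the subshift. -/
def IsFreeSubshift (Ξ : Set (ℤ × ℤ → A)) : Prop :=
  ∀ u ∈ Ξ, ∀ n : ℤ × ℤ, shift2 n u = u → n = 0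

/-- A continuous `ℤ`-valued cocycle on the subshift `Ξ`: continuous in the first
variable, and satisfying `θ(u, n+m) = θ(u, n) + θ(φⁿ u, m)` on `Ξ`. -/
def IsContinuousCocycle (Ξ : Set (ℤ × ℤ → A)) (θ : (ℤ × ℤ → A) → ℤ × ℤ → ℤ) : Prop :=
  (∀ n : ℤ × ℤ, ContinuousOn (fun u => θ u n) Ξ) ∧
  (∀ u ∈ Ξ, ∀ n m : ℤ × ℤ, θ u (n + m) = θ u n + θ (shift2 n u) m)

variable [MeasurableSpace A]

/-- A shift-invariant Borel probability measure on the subshift `Ξ`, encoded as a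
probability measure on the full shift giving `Ξ` full measure. -/
def IsInvariantProb (Ξ : Set (ℤ × ℤ → A)) (μ : Measure (ℤ × ℤ → A)) : Prop :=
  IsProbabilityMeasure μ ∧ μ Ξᶜ = 0 ∧ ∀ n : ℤ × ℤ, μ.map (shift2 n) = μ

end Defs

/-- Horizontal shear: there are `u ∈ Ξ` and `N, N' : ℤ` such that for every `n : ℤ`
there is `v ∈ Ξ` agreeing with `u` on `ℤ × N₊` and with `φ^{(n,0)} u` on `ℤ × N'₋`. -/
def AdmitsHorizontalShear {A : Type*} [TopologicalSpace A] (Ξ : Set (ℤ × ℤ → A)) : Prop :=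
  ∃ u ∈ Ξ, ∃ N N' : ℤ, ∀ n : ℤ, ∃ v ∈ Ξ,
    (∀ m : ℤ × ℤ, N < m.2 → v m = u m) ∧
    (∀ m : ℤ × ℤ, m.2 < N' → v m = shift2 (n, 0) u m)

/-- Vertical shear: there are `u ∈ Ξ` and `N, N' : ℤ` such that for every `n : ℤ`
there is `v ∈ Ξ` agreeing with `u` on `N₊ × ℤ` and with `φ^{(0,n)} u` on `N'₋ × ℤ`. -/
def AdmitsVerticalShear {A : Type*} [TopologicalSpace A] (Ξ : Set (ℤ × ℤ → A)) : Prop :=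
  ∃ u ∈ Ξ, ∃ N N' : ℤ, ∀ n : ℤ, ∃ v ∈ Ξ,
    (∀ m : ℤ × ℤ, N < m.1 → v m = u m) ∧
    (∀ m : ℤ × ℤ, m.1 < N' → v m = shift2 (0, n) u m)

/-- `λ = (λ₁, λ₂) ∈ ℝ²` is a topological eigenvalue of the shift action on `Ξ`:
there is a continuous `ψ : Ξ → ℂ` of modulus one with
`ψ(φⁿ u) = exp(2πi (λ₁ n₁ + λ₂ n₂)) ψ(u)`. -/
def IsTopologicalEigenvalue {A : Type*} [TopologicalSpace A] (Ξ : Set (ℤ × ℤ → A))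
    (lam : ℝ × ℝ) : Prop :=
  ∃ ψ : (ℤ × ℤ → A) → ℂ, ContinuousOn ψ Ξ ∧ (∀ u ∈ Ξ, ‖ψ u‖ = 1) ∧
    ∀ u ∈ Ξ, ∀ n : ℤ × ℤ,
      ψ (shift2 n u) =
        Complex.exp (2 * Real.pi * Complex.I *
          ((lam.1 * (n.1 : ℝ) + lam.2 * (n.2 : ℝ) : ℝ) : ℂ)) * ψ u

open Filter Topology

lemma abs_exp_two_pi_I (r : ℝ) :
    ‖Complex.exp (2 * Real.pi * Complex.I * (r : ℂ))‖ = 1 := by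
  rw [show (2 * (Real.pi : ℂ) * Complex.I * (r : ℂ))
        = ((2 * Real.pi * r : ℝ) : ℂ) * Complex.I by push_cast; ring,
    Complex.norm_exp_ofReal_mul_I]

lemma key {A : Type} [Fintype A] [TopologicalSpace A] [DiscreteTopology A]
    {Ξ : Set (ℤ × ℤ → A)} (hclosed : IsClosed Ξ)
    {ψ : (ℤ × ℤ → A) → ℂ} (hψ : ContinuousOn ψ Ξ)
    (seq : ℕ → ((ℤ × ℤ → A) × (ℤ × ℤ → A)))
    (hmem : ∀ k, seq k ∈ Ξ ×ˢ Ξ)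
    (hagree : ∀ m : ℤ × ℤ, ∀ᶠ k in atTop, (seq k).1 m = (seq k).2 m)
    (c : ℝ) (hconst : ∀ k, ‖ψ (seq k).1 - ψ (seq k).2‖ = c) :
    c = 0 := by
  have hcomp : IsCompact Ξ := hclosed.isCompact
  have hcomp2 : IsCompact (Ξ ×ˢ Ξ) := hcomp.prod hcomp
  have hle : Filter.map seq atTop ≤ Filter.principal (Ξ ×ˢ Ξ) :=
    Filter.tendsto_principal.2 (Filter.Eventually.of_forall hmem)
  obtain ⟨⟨p, q⟩, hpqmem, hcl⟩ := hcomp2.exists_clusterPt hle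
  have hpq : p = q := by
    funext m
    have hU : {z : (ℤ × ℤ → A) × (ℤ × ℤ → A) | z.1 m = p m ∧ z.2 m = q m} ∈ 𝓝 (p, q) := by
      refine IsOpen.mem_nhds ?_ ⟨rfl, rfl⟩
      exact (((continuous_apply (A := fun _ : ℤ × ℤ => A) m).comp continuous_fst).isOpen_preimage ({p m} : Set A)
              (isOpen_discrete _)).inter
            (((continuous_apply (A := fun _ : ℤ × ℤ => A) m).comp continuous_snd).isOpen_preimage ({q m} : Set A)
              (isOpen_discrete _))
    have hfreq : ∃ᶠ k in atTop, (seq k).1 m = p m ∧ (seq k).2 m = q m :=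
      mapClusterPt_iff_frequently.1 hcl _ hU
    obtain ⟨k, ⟨h1, h2⟩, h3⟩ := (hfreq.and_eventually (hagree m)).exists
    rw [← h1, h3, h2]
  set g : ((ℤ × ℤ → A) × (ℤ × ℤ → A)) → ℝ := fun z => ‖ψ z.1 - ψ z.2‖ with hgdef
  have hg : ContinuousOn g (Ξ ×ˢ Ξ) :=
    continuous_norm.comp_continuousOn
      ((hψ.comp continuous_fst.continuousOn (fun z hz => hz.1)).sub
       (hψ.comp continuous_snd.continuousOn (fun z hz => hz.2)))
  have hGne : (nhdsWithin (p, q) (Ξ ×ˢ Ξ) ⊓ Filter.map seq atTop).NeBot := by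
    have h1 : 𝓝 (p, q) ⊓ Filter.map seq atTop ≤
        nhdsWithin (p, q) (Ξ ×ˢ Ξ) ⊓ Filter.map seq atTop := by
      rw [nhdsWithin]
      exact le_inf (le_inf inf_le_left (le_trans inf_le_right hle)) inf_le_right
    exact Filter.NeBot.mono hcl h1
  haveI := hGne
  have t1 : Tendsto g (nhdsWithin (p, q) (Ξ ×ˢ Ξ) ⊓ Filter.map seq atTop) (𝓝 (g (p, q))) :=
    (hg (p, q) hpqmem).mono_left inf_le_left
  have t2 : Tendsto g (nhdsWithin (p, q) (Ξ ×ˢ Ξ) ⊓ Filter.map seq atTop) (𝓝 c) := by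
    have : Tendsto g (Filter.map seq atTop) (𝓝 c) := by
      rw [Filter.tendsto_map'_iff]
      simpa [Function.comp_def, hgdef, hconst] using (tendsto_const_nhds : Tendsto (fun _ : ℕ => c) atTop (𝓝 c))
    exact this.mono_left inf_le_right
  have hc : g (p, q) = c := tendsto_nhds_unique t1 t2
  rw [← hc, hgdef]
  simp [hpq]

/-- In a minimal, uniquely ergodic `ℤ²` subshift admitting a horizontal shear, the first
component of every topological eigenvalue is an integer. -/
theorem statement4 {A : Type} [Fintype A] [Nonempty A]
    [TopologicalSpace A] [DiscreteTopology A] [MeasurableSpace A] [BorelSpace A]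
    (Ξ : Set (ℤ × ℤ → A)) (hsub : IsSubshift Ξ) (hmin : IsMinimalSubshift Ξ)
    (huerg : ∃! μ : Measure (ℤ × ℤ → A), IsInvariantProb Ξ μ)
    (hshear : AdmitsHorizontalShear Ξ)
    (lam : ℝ × ℝ) (heig : IsTopologicalEigenvalue Ξ lam) :
    ∃ k : ℤ, lam.1 = (k : ℝ) := by
  obtain ⟨ψ, hψc, hψabs, hψeig⟩ := heig
  obtain ⟨u, huΞ, N, N', hsh⟩ := hshear
  obtain ⟨-, hclosed, hinv⟩ := hsub
  obtain ⟨v, hvΞ, hv1, hv2⟩ := hsh 1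
  set y := shift2 (1, 0) u with hy
  have hyΞ : y ∈ Ξ := hinv _ u huΞ
  have c1 : ‖ψ v - ψ u‖ = 0 := by
    refine key hclosed hψc
      (fun k => (shift2 (0, (k : ℤ)) v, shift2 (0, (k : ℤ)) u))
      (fun k => ⟨hinv _ v hvΞ, hinv _ u huΞ⟩) ?_ _ ?_
    · intro m
      rw [Filter.eventually_atTop]
      refine ⟨(N - m.2 + 1).toNat, fun k hk => ?_⟩
      have h1 : (N - m.2 + 1 : ℤ) ≤ (k : ℤ) := Int.toNat_le.1 hk
      show v (m + (0, (k : ℤ))) = u (m + (0, (k : ℤ)))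
      apply hv1
      have : (m + ((0 : ℤ), (k : ℤ))).2 = m.2 + k := rfl
      omega
    · intro k
      simp only
      rw [hψeig v hvΞ (0, k), hψeig u huΞ (0, k), ← mul_sub, norm_mul,
        abs_exp_two_pi_I, one_mul]
  have c2 : ‖ψ v - ψ y‖ = 0 := by
    refine key hclosed hψc
      (fun k => (shift2 (0, -(k : ℤ)) v, shift2 (0, -(k : ℤ)) y))
      (fun k => ⟨hinv _ v hvΞ, hinv _ y hyΞ⟩) ?_ _ ?_
    · intro m
      rw [Filter.eventually_atTop]
      refine ⟨(m.2 - N' + 1).toNat, fun k hk => ?_⟩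
      have h1 : (m.2 - N' + 1 : ℤ) ≤ (k : ℤ) := Int.toNat_le.1 hk
      show v (m + (0, -(k : ℤ))) = y (m + (0, -(k : ℤ)))
      rw [hy]
      apply hv2
      have : (m + ((0 : ℤ), -(k : ℤ))).2 = m.2 - k := by
        show m.2 + -(k : ℤ) = m.2 - k; ring
      omega
    · intro k
      simp only
      rw [hψeig v hvΞ (0, -(k : ℤ)), hψeig y hyΞ (0, -(k : ℤ)), ← mul_sub, norm_mul,
        abs_exp_two_pi_I, one_mul]
  have hvu : ψ v = ψ u := sub_eq_zero.1 (by exact_mod_cast norm_eq_zero.1 c1)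
  have hvy : ψ v = ψ y := sub_eq_zero.1 (by exact_mod_cast norm_eq_zero.1 c2)
  have hyu : ψ y =
      Complex.exp (2 * Real.pi * Complex.I *
        ((lam.1 * (((1 : ℤ) : ℝ)) + lam.2 * (((0 : ℤ) : ℝ)) : ℝ) : ℂ)) * ψ u :=
    hψeig u huΞ (1, 0)
  have hune : ψ u ≠ 0 := by
    intro h
    have := hψabs u huΞ
    rw [h] at this
    simp at this
  have hE1 : Complex.exp (2 * Real.pi * Complex.I * ((lam.1 : ℝ) : ℂ)) = 1 := by
    have hsimp : (lam.1 * (((1 : ℤ) : ℝ)) + lam.2 * (((0 : ℤ) : ℝ)) : ℝ) = lam.1 := by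
      push_cast; ring
    rw [hsimp] at hyu
    have h2 : Complex.exp (2 * Real.pi * Complex.I * ((lam.1 : ℝ) : ℂ)) * ψ u = 1 * ψ u := by
      rw [one_mul, ← hyu, ← hvy, hvu]
    exact mul_right_cancel₀ hune h2
  obtain ⟨n, hn⟩ := Complex.exp_eq_one_iff.1 hE1
  refine ⟨n, ?_⟩
  have h2pi : ((2 : ℂ) * Real.pi * Complex.I) ≠ 0 := by
    simp [Real.pi_ne_zero, Complex.I_ne_zero]
  have : ((lam.1 : ℝ) : ℂ) = (n : ℂ) := by
    apply mul_left_cancel₀ h2pi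
    rw [hn]; ring
  exact_mod_cast this
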